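/- arXiv:1812.06557 — 3 statements merged into one kernel-verified Lean document; each statement's English description precedes it below -/
import Mathlib

section
/- Let E be a finite-dimensional real inner product space, d ≥ 2 an integer, L_d > 0, M > 0, D > 0, 0 ≤ σ < 1, 0 < σ_l, and k ≥ 1 an integer. Let A_1, …, A_k > 0 and λ_1, …, λ_k > 0 be reals and y_1, …, y_k, x̃_0, …, x̃_{k−1} ∈ E such that: (i) Σ_{j=1}^{k} (A_j/λ_j)·‖y_j − x̃_{j−1}‖² ≤ D²/(1 − σ²); (ii) λ_j·‖y_j − x̃_{j−1}‖^{d−1} ≥ d!·σ_l/(L_d + M) for every 1 ≤ j ≤ k; (iii) A_k ≥ (1/4)·(Σ_{j=1}^{k} √λ_j)². Then A_k ≥ (1/4)·C^{−2p/q}·(Σ_{j=1}^{k} A_j^{1/q})^{2p}, where q = (3d+1)/(d−1), p = (3d+1)/(2(d+1)), and C = (D²/(1 − σ²))·((d!·σ_l)/(L_d + M))^{−2/(d−1)}. -/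
open scoped BigOperators

theorem stmt2 {E : Type*} [NormedAddCommGroup E] [InnerProductSpace ℝ E]
    [FiniteDimensional ℝ E]
    (d : ℕ) (hd : 2 ≤ d) (Ld M D σ σl : ℝ)
    (hLd : 0 < Ld) (hM : 0 < M) (hD : 0 < D) (hσ0 : 0 ≤ σ) (hσ1 : σ < 1) (hσl : 0 < σl)
    (k : ℕ) (hk : 1 ≤ k)
    (A lam : ℕ → ℝ) (y xt : ℕ → E)
    (hA : ∀ j, 1 ≤ j → j ≤ k → 0 < A j) (hlam : ∀ j, 1 ≤ j → j ≤ k → 0 < lam j)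
    (h1 : ∑ j ∈ Finset.Icc 1 k, A j / lam j * ‖y j - xt (j - 1)‖ ^ 2 ≤ D ^ 2 / (1 - σ ^ 2))
    (h2 : ∀ j, 1 ≤ j → j ≤ k →
      (d.factorial : ℝ) * σl / (Ld + M) ≤ lam j * ‖y j - xt (j - 1)‖ ^ (d - 1))
    (h3 : (1 / 4 : ℝ) * (∑ j ∈ Finset.Icc 1 k, Real.sqrt (lam j)) ^ 2 ≤ A k)
    (p q C : ℝ)
    (hq : q = (3 * (d : ℝ) + 1) / ((d : ℝ) - 1))
    (hp : p = (3 * (d : ℝ) + 1) / (2 * ((d : ℝ) + 1)))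
    (hC : C = D ^ 2 / (1 - σ ^ 2) *
      ((d.factorial : ℝ) * σl / (Ld + M)) ^ (-(2 / ((d : ℝ) - 1)))) :
    (1 / 4 : ℝ) * C ^ (-(2 * p / q)) *
        (∑ j ∈ Finset.Icc 1 k, A j ^ (1 / q)) ^ (2 * p) ≤ A k := by
  -- basic positivity facts
  have hd2 : (2:ℝ) ≤ (d:ℝ) := by exact_mod_cast hd
  have hdm : (0:ℝ) < (d:ℝ) - 1 := by linarith
  have hdm' : ((d:ℝ) - 1) ≠ 0 := ne_of_gt hdm
  have hdp : ((d:ℝ) + 1) ≠ 0 := by positivity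
  have h3d : (3*(d:ℝ) + 1) ≠ 0 := by positivity
  have hσ2 : 0 < 1 - σ ^ 2 := by nlinarith
  have hS : 0 < D ^ 2 / (1 - σ ^ 2) := by positivity
  set c : ℝ := (d.factorial : ℝ) * σl / (Ld + M) with hc_def
  have hfac : (0:ℝ) < (d.factorial : ℝ) := by exact_mod_cast d.factorial_pos
  have hc : 0 < c := by positivity
  have hq1 : 1 < q := by rw [hq, lt_div_iff₀ hdm]; linarith
  have hq0 : 0 < q := lt_trans one_pos hq1
  have hp0 : 0 < p := by rw [hp]; positivity
  have hC0 : 0 < C := by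
    rw [hC]; exact mul_pos hS (Real.rpow_pos_of_pos hc _)
  -- the exponent e = (d+1)/(d-1)
  set e : ℝ := ((d:ℝ) + 1) / ((d:ℝ) - 1) with he_def
  -- Step A : ∑ A j * lam j ^ (-e) ≤ C
  have stepA : ∑ j ∈ Finset.Icc 1 k, A j * lam j ^ (-e) ≤ C := by
    have key : ∀ j ∈ Finset.Icc 1 k,
        A j * lam j ^ (-e) ≤ (A j / lam j * ‖y j - xt (j - 1)‖ ^ 2) * c ^ (-(2 / ((d:ℝ) - 1))) := by
      intro j hj
      rw [Finset.mem_Icc] at hj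
      have hAj := hA j hj.1 hj.2
      have hlj := hlam j hj.1 hj.2
      have h2j := h2 j hj.1 hj.2
      set r : ℝ := ‖y j - xt (j - 1)‖ with hr_def
      have hr0 : 0 ≤ r := norm_nonneg _
      have hrpos : 0 < r := by
        rcases lt_or_eq_of_le hr0 with h | h
        · exact h
        · exfalso
          rw [← h, zero_pow (by omega : d - 1 ≠ 0), mul_zero] at h2j
          exact absurd h2j (not_le.2 hc)
      -- from h2j : c ≤ lam j * r ^ (d-1), raise to power 2/(d-1)
      have hpow : c ^ ((2:ℝ) / ((d:ℝ) - 1)) ≤ lam j ^ ((2:ℝ) / ((d:ℝ) - 1)) * r ^ 2 := by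
        have hR : (lam j * r ^ (d-1)) ^ ((2:ℝ) / ((d:ℝ) - 1))
            = lam j ^ ((2:ℝ) / ((d:ℝ) - 1)) * r ^ 2 := by
          rw [Real.mul_rpow (le_of_lt hlj) (by positivity)]
          congr 1
          rw [← Real.rpow_natCast r (d-1), ← Real.rpow_natCast r 2,
            ← Real.rpow_mul hr0]
          congr 1
          have hcast : ((d - 1 : ℕ) : ℝ) = (d:ℝ) - 1 := by
            have h1d : (1:ℕ) ≤ d := by omega
            push_cast [Nat.cast_sub h1d]; ring
          rw [hcast]; field_simp; norm_num
        rw [← hR]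
        exact Real.rpow_le_rpow (le_of_lt hc) h2j (by positivity)
      -- rearrange
      have hlre : lam j ^ (-e) = (lam j)⁻¹ * (lam j ^ ((2:ℝ) / ((d:ℝ) - 1)))⁻¹ := by
        rw [← Real.rpow_neg_one (lam j), ← Real.rpow_neg (le_of_lt hlj),
          ← Real.rpow_add hlj]
        congr 1
        rw [he_def]; field_simp; ring
      have hcpos : 0 < c ^ ((2:ℝ) / ((d:ℝ) - 1)) := Real.rpow_pos_of_pos hc _
      have hlpos : 0 < lam j ^ ((2:ℝ) / ((d:ℝ) - 1)) := Real.rpow_pos_of_pos hlj _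
      have hinv : (lam j ^ ((2:ℝ) / ((d:ℝ) - 1)))⁻¹ ≤ r ^ 2 / c ^ ((2:ℝ) / ((d:ℝ) - 1)) := by
        rw [inv_le_iff_one_le_mul₀ hlpos, div_mul_eq_mul_div, le_div_iff₀ hcpos,
          one_mul, mul_comm]
        exact hpow
      have hcneg : c ^ (-(2 / ((d:ℝ) - 1))) = (c ^ ((2:ℝ) / ((d:ℝ) - 1)))⁻¹ :=
        Real.rpow_neg (le_of_lt hc) _
      rw [hlre, hcneg]
      calc A j * ((lam j)⁻¹ * (lam j ^ ((2:ℝ) / ((d:ℝ) - 1)))⁻¹)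
          ≤ A j * ((lam j)⁻¹ * (r ^ 2 / c ^ ((2:ℝ) / ((d:ℝ) - 1)))) := by
            apply mul_le_mul_of_nonneg_left _ (le_of_lt hAj)
            exact mul_le_mul_of_nonneg_left hinv (by positivity)
        _ = A j / lam j * r ^ 2 * (c ^ ((2:ℝ) / ((d:ℝ) - 1)))⁻¹ := by
            rw [div_eq_mul_inv, div_eq_mul_inv]; ring
    calc ∑ j ∈ Finset.Icc 1 k, A j * lam j ^ (-e)
        ≤ ∑ j ∈ Finset.Icc 1 k,
            (A j / lam j * ‖y j - xt (j - 1)‖ ^ 2) * c ^ (-(2 / ((d:ℝ) - 1))) :=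
          Finset.sum_le_sum key
      _ = (∑ j ∈ Finset.Icc 1 k, A j / lam j * ‖y j - xt (j - 1)‖ ^ 2)
            * c ^ (-(2 / ((d:ℝ) - 1))) := by rw [← Finset.sum_mul]
      _ ≤ D ^ 2 / (1 - σ ^ 2) * c ^ (-(2 / ((d:ℝ) - 1))) :=
          mul_le_mul_of_nonneg_right h1 (le_of_lt (Real.rpow_pos_of_pos hc _))
      _ = C := by rw [hC]
  -- Step B : Hölder with conjugate exponents (q, p)
  have conj : Real.HolderConjugate q p := by
    refine ⟨?_, hq0, hp0⟩
    rw [hq, hp, inv_one]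
    field_simp
    ring
  set T : ℝ := ∑ j ∈ Finset.Icc 1 k, Real.sqrt (lam j) with hT_def
  have hT0 : 0 ≤ T := Finset.sum_nonneg fun j _ => Real.sqrt_nonneg _
  have holder : ∑ j ∈ Finset.Icc 1 k, A j ^ (1/q) ≤ C ^ (1/q) * T ^ (1/p) := by
    have hf0 : ∀ i ∈ Finset.Icc 1 k, (0:ℝ) ≤ (A i * lam i ^ (-e)) ^ (1/q) := by
      intro i hi
      rw [Finset.mem_Icc] at hi
      have h1' := hA i hi.1 hi.2
      have h2' := Real.rpow_pos_of_pos (hlam i hi.1 hi.2) (-e)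
      exact Real.rpow_nonneg (by positivity) _
    have hg0 : ∀ i ∈ Finset.Icc 1 k, (0:ℝ) ≤ Real.sqrt (lam i) ^ (1/p) :=
      fun i _ => Real.rpow_nonneg (Real.sqrt_nonneg _) _
    have H := Real.inner_le_Lp_mul_Lq_of_nonneg (Finset.Icc 1 k) conj hf0 hg0
    have hexp : -e * (1/q) + 1/2 * (1/p) = 0 := by
      rw [he_def, hq, hp]; field_simp; ring
    have hfg : ∀ j ∈ Finset.Icc 1 k,
        (A j * lam j ^ (-e)) ^ (1/q) * Real.sqrt (lam j) ^ (1/p) = A j ^ (1/q) := by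
      intro j hj
      rw [Finset.mem_Icc] at hj
      have hAj := hA j hj.1 hj.2
      have hlj := hlam j hj.1 hj.2
      rw [Real.mul_rpow (le_of_lt hAj) (Real.rpow_nonneg (le_of_lt hlj) _),
        Real.sqrt_eq_rpow, ← Real.rpow_mul (le_of_lt hlj),
        ← Real.rpow_mul (le_of_lt hlj), mul_assoc, ← Real.rpow_add hlj]
      norm_num at hexp ⊢
      rw [hexp, Real.rpow_zero, mul_one]
    have hfq : ∀ j ∈ Finset.Icc 1 k,
        ((A j * lam j ^ (-e)) ^ (1/q)) ^ q = A j * lam j ^ (-e) := by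
      intro j hj
      rw [Finset.mem_Icc] at hj
      have hAj := hA j hj.1 hj.2
      have hlj := hlam j hj.1 hj.2
      rw [← Real.rpow_mul (by positivity), one_div_mul_cancel (ne_of_gt hq0),
        Real.rpow_one]
    have hgp : ∀ j ∈ Finset.Icc 1 k,
        (Real.sqrt (lam j) ^ (1/p)) ^ p = Real.sqrt (lam j) := by
      intro j hj
      rw [← Real.rpow_mul (Real.sqrt_nonneg _), one_div_mul_cancel (ne_of_gt hp0),
        Real.rpow_one]
    rw [Finset.sum_congr rfl hfg, Finset.sum_congr rfl hfq,
      Finset.sum_congr rfl hgp] at H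
    refine le_trans H (mul_le_mul_of_nonneg_right ?_ (Real.rpow_nonneg hT0 _))
    apply Real.rpow_le_rpow _ stepA (by positivity)
    exact Finset.sum_nonneg fun j hj => by
      rw [Finset.mem_Icc] at hj
      have := hA j hj.1 hj.2
      have := Real.rpow_pos_of_pos (hlam j hj.1 hj.2) (-e)
      positivity
  -- Step C : assemble
  set X : ℝ := ∑ j ∈ Finset.Icc 1 k, A j ^ (1/q) with hX_def
  have hX0 : 0 ≤ X := Finset.sum_nonneg fun j hj => by
    rw [Finset.mem_Icc] at hj
    exact Real.rpow_nonneg (le_of_lt (hA j hj.1 hj.2)) _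
  have hXp : X ^ (2*p) ≤ C ^ (2*p/q) * T ^ 2 := by
    have := Real.rpow_le_rpow hX0 holder (by positivity : (0:ℝ) ≤ 2*p)
    refine le_trans this (le_of_eq ?_)
    have e1 : 1/q * (2*p) = 2*p/q := by field_simp
    have e2 : 1/p * (2*p) = 2 := by field_simp
    rw [Real.mul_rpow (Real.rpow_nonneg (le_of_lt hC0) _) (Real.rpow_nonneg hT0 _),
      ← Real.rpow_mul (le_of_lt hC0), ← Real.rpow_mul hT0, e1, e2, Real.rpow_two]
  have hCne : C ^ (-(2*p/q)) * C ^ (2*p/q) = 1 := by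
    rw [← Real.rpow_add hC0, neg_add_cancel, Real.rpow_zero]
  calc (1/4 : ℝ) * C ^ (-(2*p/q)) * X ^ (2*p)
      ≤ (1/4 : ℝ) * C ^ (-(2*p/q)) * (C ^ (2*p/q) * T ^ 2) := by
        apply mul_le_mul_of_nonneg_left hXp
        positivity
    _ = (1/4 : ℝ) * (C ^ (-(2*p/q)) * C ^ (2*p/q)) * T ^ 2 := by ring
    _ = (1/4 : ℝ) * T ^ 2 := by rw [hCne, mul_one]
    _ ≤ A k := h3
end

section
/- Let d ≥ 2 be an integer, set p = (3d+1)/(2(d+1)) and q = (3d+1)/(d−1) (so that 2p/q = (d−1)/(d+1) < 1), let C > 0, and let (A_k)_{k≥1} be a sequence of positive reals satisfying A_k ≥ (1/4)·C^{−2p/q}·(Σ_{j=1}^{k} A_j^{1/q})^{2p} for every integer k ≥ 1. Then for every integer k ≥ 1, A_k ≥ T^{(d+1)/2}·k^{(3d+1)/2}, where T = (1/4)·C^{−2p/q}·(2/(d+1))^{2p}. -/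
open scoped BigOperators

lemma step_bound (γ : ℝ) (hγ : 1 ≤ γ) (k : ℕ) :
    ((k : ℝ) + 1) ^ γ ≤ (k : ℝ) ^ γ + γ * ((k : ℝ) + 1) ^ (γ - 1) := by
  have hk1 : (0 : ℝ) < (k : ℝ) + 1 := by positivity
  have hs : (-1 : ℝ) ≤ -(1 / ((k : ℝ) + 1)) := by
    rw [neg_le_neg_iff]
    rw [div_le_one hk1]
    linarith [Nat.cast_nonneg (α := ℝ) k]
  have hb := one_add_mul_self_le_rpow_one_add hs hγ
  have h1 : (1 : ℝ) + -(1 / ((k : ℝ) + 1)) = (k : ℝ) / ((k : ℝ) + 1) := by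
    field_simp
    ring
  rw [h1] at hb
  have h2 : ((k : ℝ) / ((k : ℝ) + 1)) ^ γ = (k : ℝ) ^ γ / ((k : ℝ) + 1) ^ γ := by
    exact Real.div_rpow (Nat.cast_nonneg k) hk1.le γ
  rw [h2] at hb
  have h3 : (0 : ℝ) < ((k : ℝ) + 1) ^ γ := Real.rpow_pos_of_pos hk1 γ
  have hb' := mul_le_mul_of_nonneg_right hb h3.le
  have h4 : (k : ℝ) ^ γ / ((k : ℝ) + 1) ^ γ * ((k : ℝ) + 1) ^ γ = (k : ℝ) ^ γ := by
    field_simp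
  rw [h4] at hb'
  have h5 : ((k : ℝ) + 1) ^ (γ - 1) * ((k : ℝ) + 1) = ((k : ℝ) + 1) ^ γ := by
    nth_rewrite 2 [show ((k:ℝ)+1) = ((k:ℝ)+1) ^ (1:ℝ) by rw [Real.rpow_one]]
    rw [← Real.rpow_add hk1]
    ring_nf
  have h6 : (1 + γ * -(1 / ((k : ℝ) + 1))) * (((k : ℝ) + 1) ^ γ)
      = ((k : ℝ) + 1) ^ γ - γ * ((k : ℝ) + 1) ^ (γ - 1) := by
    rw [← h5]; field_simp; ring
  rw [h6] at hb'
  linarith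

lemma sum_rpow_lb (γ : ℝ) (hγ : 1 ≤ γ) (k : ℕ) :
    (k : ℝ) ^ γ / γ ≤ ∑ j ∈ Finset.Icc 1 k, (j : ℝ) ^ (γ - 1) := by
  have hγ0 : (0 : ℝ) < γ := lt_of_lt_of_le one_pos hγ
  induction k with
  | zero =>
      simp [Real.zero_rpow (ne_of_gt hγ0)]
  | succ n ih =>
      have hins : insert (n + 1) (Finset.Icc 1 n) = Finset.Icc 1 (n + 1) :=
        Finset.insert_Icc_right_eq_Icc_add_one (Nat.one_le_iff_ne_zero.mpr (Nat.succ_ne_zero n))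
      rw [← hins, Finset.sum_insert (by simp)]
      have hs := step_bound γ hγ n
      have : ((n : ℝ) + 1) ^ γ / γ ≤ (n : ℝ) ^ γ / γ + ((n : ℝ) + 1) ^ (γ - 1) := by
        rw [div_add' _ _ _ (ne_of_gt hγ0), div_le_div_iff₀ hγ0 hγ0]
        nlinarith
      push_cast
      linarith

theorem stmt3 (d : ℕ) (hd : 2 ≤ d) (p q C T : ℝ)
    (hp : p = (3 * (d : ℝ) + 1) / (2 * ((d : ℝ) + 1)))
    (hq : q = (3 * (d : ℝ) + 1) / ((d : ℝ) - 1))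
    (hC : 0 < C)
    (hT : T = (1 / 4 : ℝ) * C ^ (-(2 * p / q)) * (2 / ((d : ℝ) + 1)) ^ (2 * p))
    (A : ℕ → ℝ) (hApos : ∀ k : ℕ, 1 ≤ k → 0 < A k)
    (hrec : ∀ k : ℕ, 1 ≤ k →
      (1 / 4 : ℝ) * C ^ (-(2 * p / q)) *
          (∑ j ∈ Finset.Icc 1 k, A j ^ (1 / q)) ^ (2 * p) ≤ A k) :
    ∀ k : ℕ, 1 ≤ k → T ^ (((d : ℝ) + 1) / 2) * (k : ℝ) ^ ((3 * (d : ℝ) + 1) / 2) ≤ A k := by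
  have hd2 : (2:ℝ) ≤ (d:ℝ) := by exact_mod_cast hd
  have hdm1 : (0:ℝ) < (d:ℝ) - 1 := by linarith
  have hdp1 : (0:ℝ) < (d:ℝ) + 1 := by linarith
  have h3d : (0:ℝ) < 3*(d:ℝ) + 1 := by linarith
  have hq0 : 0 < q := by rw [hq]; positivity
  have hp0 : 0 < p := by rw [hp]; positivity
  have hc0 : (0:ℝ) < (1/4:ℝ) * C ^ (-(2 * p / q)) := by positivity
  have hT0 : 0 < T := by rw [hT]; positivity
  set c : ℝ := (1/4:ℝ) * C ^ (-(2 * p / q)) with hcdef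
  set α : ℝ := (3 * (d:ℝ) + 1)/2 with hα
  set E : ℝ := T ^ (((d:ℝ) + 1)/2) with hE
  have hE0 : 0 < E := Real.rpow_pos_of_pos hT0 _
  have h2pq : 2*p/q = ((d:ℝ)-1)/((d:ℝ)+1) := by
    rw [hp, hq]; field_simp
  have h2pq1 : 2*p/q < 1 := by rw [h2pq, div_lt_one hdp1]; linarith
  have hαq : α * (1/q) = ((d:ℝ)-1)/2 := by
    rw [hα, hq]; field_simp
  have hγ1 : (1:ℝ) ≤ ((d:ℝ)+1)/2 := by linarith
  intro k
  induction k using Nat.strong_induction_on with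
  | _ k ih =>
  intro hk
  by_contra hcon
  push_neg at hcon
  have hk0 : (0:ℝ) < (k:ℝ) := by exact_mod_cast hk
  set X : ℝ := E * (k:ℝ) ^ α with hX
  have hX0 : 0 < X := mul_pos hE0 (Real.rpow_pos_of_pos hk0 α)
  have hx0 : 0 < A k := hApos k hk
  set r : ℝ := A k / X with hr
  have hr0 : 0 < r := div_pos hx0 hX0
  have hr1 : r < 1 := (div_lt_one hX0).mpr hcon
  have hxr : A k = r * X := by
    rw [hr, div_mul_cancel₀ _ (ne_of_gt hX0)]
  -- termwise bound
  have hterm : ∀ j ∈ Finset.Icc 1 k,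
      r ^ (1/q) * (E ^ (1/q) * (j:ℝ) ^ (((d:ℝ)-1)/2)) ≤ A j ^ (1/q) := by
    intro j hj
    simp only [Finset.mem_Icc] at hj
    obtain ⟨hj1, hjk⟩ := hj
    have hj0 : (0:ℝ) ≤ (j:ℝ) := Nat.cast_nonneg j
    have hEj : (E * (j:ℝ) ^ α) ^ (1/q) = E ^ (1/q) * (j:ℝ) ^ (((d:ℝ)-1)/2) := by
      rw [Real.mul_rpow hE0.le (Real.rpow_nonneg hj0 α), ← Real.rpow_mul hj0, hαq]
    rcases eq_or_lt_of_le hjk with hjk' | hjk'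
    · subst hjk'
      rw [hxr, Real.mul_rpow hr0.le hX0.le, hX, hEj]
    · have hih := ih j hjk' hj1
      have h1 : (E * (j:ℝ) ^ α) ^ (1/q) ≤ A j ^ (1/q) :=
        Real.rpow_le_rpow (by positivity) hih (by positivity)
      rw [hEj] at h1
      have h2 : r ^ (1/q) ≤ 1 := Real.rpow_le_one hr0.le hr1.le (by positivity)
      calc r ^ (1/q) * (E ^ (1/q) * (j:ℝ) ^ (((d:ℝ)-1)/2))
          ≤ 1 * (E ^ (1/q) * (j:ℝ) ^ (((d:ℝ)-1)/2)) := by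
            apply mul_le_mul_of_nonneg_right h2 (by positivity)
        _ = E ^ (1/q) * (j:ℝ) ^ (((d:ℝ)-1)/2) := one_mul _
        _ ≤ A j ^ (1/q) := h1
  have hsum1 : r ^ (1/q) * E ^ (1/q) * ∑ j ∈ Finset.Icc 1 k, (j:ℝ) ^ (((d:ℝ)-1)/2)
      ≤ ∑ j ∈ Finset.Icc 1 k, A j ^ (1/q) := by
    calc r ^ (1/q) * E ^ (1/q) * ∑ j ∈ Finset.Icc 1 k, (j:ℝ) ^ (((d:ℝ)-1)/2)
        = ∑ j ∈ Finset.Icc 1 k, r ^ (1/q) * (E ^ (1/q) * (j:ℝ) ^ (((d:ℝ)-1)/2)) := by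
          rw [Finset.mul_sum]; congr 1; funext j; ring
      _ ≤ ∑ j ∈ Finset.Icc 1 k, A j ^ (1/q) := Finset.sum_le_sum hterm
  have hsum2 : (k:ℝ) ^ (((d:ℝ)+1)/2) / (((d:ℝ)+1)/2)
      ≤ ∑ j ∈ Finset.Icc 1 k, (j:ℝ) ^ (((d:ℝ)-1)/2) := by
    have := sum_rpow_lb (((d:ℝ)+1)/2) hγ1 k
    have he : ((d:ℝ)+1)/2 - 1 = ((d:ℝ)-1)/2 := by ring
    rwa [he] at this
  set B : ℝ := r ^ (1/q) * E ^ (1/q) * ((k:ℝ) ^ (((d:ℝ)+1)/2) / (((d:ℝ)+1)/2)) with hB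
  have hB0 : 0 ≤ B := by positivity
  have hSB : B ≤ ∑ j ∈ Finset.Icc 1 k, A j ^ (1/q) := by
    refine le_trans ?_ hsum1
    apply mul_le_mul_of_nonneg_left hsum2 (by positivity)
  have hS2p : c * B ^ (2*p) ≤ A k := by
    refine le_trans ?_ (hrec k hk)
    apply mul_le_mul_of_nonneg_left _ hc0.le
    exact Real.rpow_le_rpow hB0 hSB (by positivity)
  -- key identity : c * B ^ (2p) = r ^ (2p/q) * X
  have hkey : c * B ^ (2*p) = r ^ (2*p/q) * X := by
    have hkp : (0:ℝ) ≤ (k:ℝ) ^ (((d:ℝ)+1)/2) := Real.rpow_nonneg hk0.le _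
    have hBsplit : B ^ (2*p)
        = r ^ ((1/q)*(2*p)) * E ^ ((1/q)*(2*p)) *
          ((k:ℝ) ^ ((((d:ℝ)+1)/2)*(2*p)) * (2/((d:ℝ)+1)) ^ (2*p)) := by
      have hBeq : B = r ^ (1/q) * E ^ (1/q) * ((k:ℝ) ^ (((d:ℝ)+1)/2) * (2/((d:ℝ)+1))) := by
        rw [hB, div_div_eq_mul_div, mul_div_assoc]
      rw [hBeq, Real.mul_rpow (by positivity) (by positivity),
        Real.mul_rpow (by positivity) (by positivity),
        Real.mul_rpow (by positivity) (by positivity),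
        ← Real.rpow_mul hr0.le, ← Real.rpow_mul hE0.le, ← Real.rpow_mul hk0.le]
    have e1 : (1/q)*(2*p) = 2*p/q := by ring
    have e2 : (((d:ℝ)+1)/2)*(2*p) = α := by
      rw [hα, hp]; field_simp
    rw [hBsplit, e1, e2]
    have e3 : E ^ (2*p/q) = T ^ (((d:ℝ)-1)/2) := by
      rw [hE, ← Real.rpow_mul hT0.le]
      congr 1
      rw [h2pq]; field_simp
    have e4 : c * (2/((d:ℝ)+1)) ^ (2*p) = T := by rw [hT, hcdef]
    have e5 : T ^ (((d:ℝ)-1)/2) * T = E := by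
      rw [hE]
      nth_rewrite 2 [show T = T ^ (1:ℝ) by rw [Real.rpow_one]]
      rw [← Real.rpow_add hT0]
      congr 1; ring
    rw [e3, hX]
    calc c * (r ^ (2*p/q) * T ^ (((d:ℝ)-1)/2) * ((k:ℝ) ^ α * (2/((d:ℝ)+1)) ^ (2*p)))
        = r ^ (2*p/q) * (T ^ (((d:ℝ)-1)/2) * (c * (2/((d:ℝ)+1)) ^ (2*p)) * (k:ℝ) ^ α) := by
          ring
      _ = r ^ (2*p/q) * (E * (k:ℝ) ^ α) := by rw [e4, e5]
  have hlt : r < r ^ (2*p/q) := by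
    have := Real.rpow_lt_rpow_of_exponent_gt hr0 hr1 h2pq1
    rwa [Real.rpow_one] at this
  have : A k < A k := by
    calc A k = r * X := hxr
      _ < r ^ (2*p/q) * X := by exact mul_lt_mul_of_pos_right hlt hX0
      _ = c * B ^ (2*p) := hkey.symm
      _ ≤ A k := hS2p
  exact lt_irrefl _ this
end

section
/- Let E be a finite-dimensional real inner product space, d ≥ 2 an integer, L_d > 0, M ≥ 0, f : E → ℝ d times continuously differentiable with L_d-Lipschitz d-th derivative, and h : E → ℝ convex. Let ρ̄ > 0, ε̄ > 0, σ̂ ≥ 0 and α > 0 be given with σ := σ̂ + ((L_d + M)/d!)·α < 1. Suppose λ > 0 satisfies λ ≥ max{ α^{1/d}·[(1/ρ̄)·(1 + σ̂ + ((L_d + M)/d!)·α)]^{1 − 1/d}, (σ²·α^{2/(d−1)}/(2ε̄))^{(d−1)/(d+1)} }, and that (y, u, ε) is a σ̂-approximate solution at (λ, x) for some x ∈ E. Then at least one of the following holds: (a) λ·‖y − x‖^{d−1} > α; or (b) the vector v := ∇f(y) − ∇f_x(y) + u satisfies ‖v‖ ≤ ρ̄ and ε ≤ ε̄. -/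
open scoped RealInnerProductSpace BigOperators

/-- The regularized `d`-th order Taylor approximation of `f` at `x`. -/
noncomputable def taylorReg {E : Type*} [NormedAddCommGroup E] [InnerProductSpace ℝ E]
    (f : E → ℝ) (d : ℕ) (M : ℝ) (x y : E) : ℝ :=
  ∑ i ∈ Finset.range (d + 1),
      (1 / (i.factorial : ℝ)) * iteratedFDeriv ℝ i f x (fun _ => y - x) +
    M / ((d + 1).factorial : ℝ) * ‖y - x‖ ^ (d + 1)

/-- The ε-subdifferential of a convex function `h` at `y`. -/
def epsSubdiff {E : Type*} [NormedAddCommGroup E] [InnerProductSpace ℝ E]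
    (h : E → ℝ) (ε : ℝ) (y : E) : Set E :=
  {u | ∀ z : E, h y + ⟪u, z - y⟫ - ε ≤ h z}


open Finset Set

lemma oneDimTaylor {G : Type*} [NormedAddCommGroup G] [NormedSpace ℝ G]
    (n : ℕ) (φ : ℝ → G) (L : ℝ) (hL : 0 ≤ L)
    (hφ : ContDiff ℝ n φ)
    (hLip : ∀ s t : ℝ, ‖iteratedDeriv n φ s - iteratedDeriv n φ t‖ ≤ L * |s - t|) :
    ∀ t ∈ Set.Icc (0:ℝ) 1,
      ‖φ t - ∑ i ∈ range (n + 1), (t ^ i / i.factorial) • iteratedDeriv i φ 0‖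
        ≤ L * t ^ (n + 1) / (n + 1).factorial := by
  induction n generalizing φ with
  | zero =>
    intro t ht
    simpa [abs_of_nonneg ht.1] using hLip t 0
  | succ n IH =>
    -- derivative of φ
    have hdiff : Differentiable ℝ φ := by
      apply hφ.differentiable
      simp
    set ψ := deriv φ with hψdef
    have hψ : ContDiff ℝ n ψ := by
      have := (contDiff_succ_iff_deriv (n := n)).mp (by exact_mod_cast hφ)
      exact this.2.2
    have hiter : ∀ i : ℕ, iteratedDeriv (i+1) φ = iteratedDeriv i ψ := by
      intro i; rw [iteratedDeriv_succ']
    have hLipψ : ∀ s t : ℝ, ‖iteratedDeriv n ψ s - iteratedDeriv n ψ t‖ ≤ L * |s - t| := by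
      intro s t; rw [← hiter]; exact hLip s t
    have IH' := IH ψ hψ hLipψ
    set c : ℕ → G := fun i => iteratedDeriv i φ 0 with hc
    set g : ℝ → G := fun t => φ t - ∑ i ∈ range (n + 2), (t ^ i / i.factorial) • c i with hg
    set g' : ℝ → G := fun s => ψ s - ∑ i ∈ range (n + 1), (s ^ i / i.factorial) • c (i+1)
      with hg'
    have hgderiv : ∀ s : ℝ, HasDerivAt g (g' s) s := by
      intro s
      have h1 : HasDerivAt φ (ψ s) s := (hdiff s).hasDerivAt
      have h2 : HasDerivAt (fun t : ℝ => ∑ i ∈ range (n + 2), (t ^ i / i.factorial) • c i)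
          (∑ i ∈ range (n + 2), ((i : ℝ) * s ^ (i - 1) / i.factorial) • c i) s := by
        apply HasDerivAt.fun_sum
        intro i _
        have := (hasDerivAt_pow i s).div_const (i.factorial : ℝ)
        exact this.smul_const (c i)
      have h3 : (∑ i ∈ range (n + 2), ((i : ℝ) * s ^ (i - 1) / i.factorial) • c i)
          = ∑ i ∈ range (n + 1), (s ^ i / i.factorial) • c (i+1) := by
        rw [Finset.sum_range_succ']
        simp only [Nat.cast_zero, zero_mul, zero_div, zero_smul, add_zero]
        congr 1
        funext i
        congr 1
        have : ((i+1 : ℕ) : ℝ) ≠ 0 := by positivity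
        simp only [Nat.add_sub_cancel, Nat.factorial_succ, Nat.cast_mul]
        rw [mul_div_mul_left _ _ this]
      have := h1.sub h2
      rw [h3] at this
      exact this
    have hg0 : g 0 = 0 := by
      have : (∑ i ∈ range (n + 2), ((0:ℝ) ^ i / i.factorial) • c i) = c 0 := by
        rw [Finset.sum_eq_single 0]
        · simp
        · intro i _ hi; simp [zero_pow hi]
        · simp
      show φ 0 - _ = 0
      rw [this]
      simp [hc]
    have hbound : ∀ s ∈ Set.Ico (0:ℝ) 1, ‖g' s‖ ≤ (L / (n+1).factorial) * s ^ (n+1) := by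
      intro s hs
      have := IH' s ⟨hs.1, le_of_lt hs.2⟩
      have he : (∑ i ∈ range (n + 1), (s ^ i / i.factorial) • iteratedDeriv i ψ 0)
          = ∑ i ∈ range (n + 1), (s ^ i / i.factorial) • c (i+1) := by
        apply Finset.sum_congr rfl
        intro i _
        rw [hc]
        exact congrArg _ (congrFun (hiter i) 0).symm
      rw [he] at this
      calc ‖g' s‖ ≤ L * s ^ (n + 1) / (n+1).factorial := this
        _ = (L / (n+1).factorial) * s ^ (n+1) := by ring
    have key := image_norm_le_of_norm_deriv_right_le_deriv_boundary
      (f := g) (f' := g') (a := 0) (b := 1)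
      (B := fun t => (L / (n+2).factorial) * t ^ (n+2))
      (B' := fun t => (L / (n+1).factorial) * t ^ (n+1))
      (by
        apply Continuous.continuousOn
        apply (hφ.continuous).sub
        exact continuous_finset_sum _ fun i _ => (by
          apply Continuous.smul
          · exact (continuous_pow i).div_const _
          · exact continuous_const))
      (fun s _ => (hgderiv s).hasDerivWithinAt)
      (by simp [hg0])
      (fun s => by
        have := (hasDerivAt_pow (n+2) s).const_mul (L / (n+2).factorial)
        refine this.congr_deriv ?_
        have h2 : ((n+2).factorial : ℝ) = (n+2) * (n+1).factorial := by
          exact_mod_cast Nat.factorial_succ (n+1)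
        rw [h2, show n + 2 - 1 = n + 1 by omega]; push_cast
        have : ((n:ℝ)+2) ≠ 0 := by positivity
        field_simp)
      hbound
    intro t ht
    have := key ht
    calc ‖φ t - ∑ i ∈ range (n + 1 + 1), (t ^ i / i.factorial) • iteratedDeriv i φ 0‖
        = ‖g t‖ := rfl
      _ ≤ (L / (n+2).factorial) * t ^ (n+2) := this
      _ = L * t ^ (n + 1 + 1) / (n + 1 + 1).factorial := by ring_nf


open Finset Set

lemma iteratedDeriv_clm_comp {G G' : Type*} [NormedAddCommGroup G] [NormedSpace ℝ G]
    [NormedAddCommGroup G'] [NormedSpace ℝ G'] (c : G →L[ℝ] G') (g : ℝ → G) (k : ℕ)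
    (hg : ContDiff ℝ k g) (t : ℝ) :
    iteratedDeriv k (fun s => c (g s)) t = c (iteratedDeriv k g t) := by
  rw [iteratedDeriv_eq_iteratedFDeriv, iteratedDeriv_eq_iteratedFDeriv]
  rw [show (fun s => c (g s)) = c ∘ g from rfl,
    c.iteratedFDeriv_comp_left hg.contDiffAt le_rfl]
  rfl

lemma lineTaylor {E G : Type*} [NormedAddCommGroup E] [NormedSpace ℝ E]
    [NormedAddCommGroup G] [NormedSpace ℝ G]
    (k : ℕ) (Φ : E → G) (hΦ : ContDiff ℝ k Φ) (x v : E) (t : ℝ) :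
    iteratedDeriv k (fun s : ℝ => Φ (x + s • v)) t
      = iteratedFDeriv ℝ k Φ (x + t • v) (fun _ => v) := by
  induction k generalizing Φ with
  | zero => simp
  | succ k IH =>
    rw [iteratedDeriv_succ']
    have hline : ∀ s : ℝ, HasDerivAt (fun s : ℝ => x + s • v) v s := fun s => by
      simpa using ((hasDerivAt_id s).smul_const v).const_add x
    have hd : deriv (fun s : ℝ => Φ (x + s • v)) = fun s => fderiv ℝ Φ (x + s • v) v := by
      funext s
      exact (((hΦ.differentiable (by simp))
        _).hasFDerivAt.comp_hasDerivAt s (hline s)).deriv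
    rw [hd]
    have hfd : ContDiff ℝ k (fderiv ℝ Φ) := hΦ.fderiv_right (by exact_mod_cast le_rfl)
    have hΦ' : ContDiff ℝ k (fun z => fderiv ℝ Φ z v) := hfd.clm_apply contDiff_const
    rw [IH _ hΦ']
    rw [show (fun z => fderiv ℝ Φ z v) = (ContinuousLinearMap.apply ℝ G v) ∘ (fderiv ℝ Φ)
      from rfl,
      ContinuousLinearMap.iteratedFDeriv_comp_left _ hfd.contDiffAt le_rfl,
      iteratedFDeriv_succ_apply_right]
    rfl

universe u₁ u₂

section Sym

variable {E : Type u₁} [NormedAddCommGroup E] [NormedSpace ℝ E]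

lemma finInitUpdateNe {m : ℕ} (v h : E) (j : Fin (m+1)) (hj : j ≠ Fin.last m) :
    Fin.init (Function.update (fun _ : Fin (m+1) => v) j h)
      = Function.update (fun _ : Fin m => v) (j.castPred hj) h := by
  funext i
  have hiff : (i.castSucc = j) ↔ (i = j.castPred hj) :=
    ⟨fun H => by simp [← H, Fin.castPred_castSucc],
     fun H => by rw [H, Fin.castSucc_castPred]⟩
  simp only [Fin.init, Function.update_apply, hiff]

lemma finInitUpdateLast {m : ℕ} (v h : E) :
    Fin.init (Function.update (fun _ : Fin (m+1) => v) (Fin.last m) h)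
      = fun _ : Fin m => v := by
  funext i
  simp only [Fin.init, Function.update_apply]
  rw [if_neg (Fin.castSucc_lt_last i).ne]

lemma finUpdateApplyLastNe {m : ℕ} (v h : E) (j : Fin (m+1)) (hj : j ≠ Fin.last m) :
    (Function.update (fun _ : Fin (m+1) => v) j h) (Fin.last m) = v := by
  rw [Function.update_apply, if_neg (Ne.symm hj)]

lemma lastSwap {G : Type*} [NormedAddCommGroup G] [NormedSpace ℝ G]
    (k : ℕ) (f : E → G) (hf : ContDiff ℝ (k+2) f) (x v h : E) :
    iteratedFDeriv ℝ k (fderiv ℝ (fderiv ℝ f)) x (fun _ => v) h v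
      = iteratedFDeriv ℝ k (fderiv ℝ (fderiv ℝ f)) x (fun _ => v) v h := by
  have h1 : ContDiff ℝ (k+1) (fderiv ℝ f) := hf.fderiv_right (by exact_mod_cast le_rfl)
  have hF2 : ContDiff ℝ k (fderiv ℝ (fderiv ℝ f)) :=
    h1.fderiv_right (by exact_mod_cast le_rfl)
  have hline : ContDiff ℝ k (fun s : ℝ => x + s • v) :=
    contDiff_const.add (contDiff_id.smul contDiff_const)
  have hΦ : ContDiff ℝ k (fun s : ℝ => fderiv ℝ (fderiv ℝ f) (x + s • v)) := hF2.comp hline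
  have key : ∀ a b : E,
      iteratedFDeriv ℝ k (fderiv ℝ (fderiv ℝ f)) x (fun _ => v) a b
        = iteratedDeriv k (fun s : ℝ => fderiv ℝ (fderiv ℝ f) (x + s • v) a b) 0 := by
    intro a b
    have h0 : iteratedFDeriv ℝ k (fderiv ℝ (fderiv ℝ f)) x (fun _ => v)
        = iteratedDeriv k (fun s : ℝ => fderiv ℝ (fderiv ℝ f) (x + s • v)) 0 := by
      rw [lineTaylor k _ hF2 x v 0]
      norm_num
    rw [h0]
    set c : (E →L[ℝ] E →L[ℝ] G) →L[ℝ] G :=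
      (ContinuousLinearMap.apply ℝ G b).comp
        ((ContinuousLinearMap.apply ℝ (E →L[ℝ] G) a)) with hc
    have := iteratedDeriv_clm_comp c _ k hΦ 0
    have hfun : (fun s : ℝ => c (fderiv ℝ (fderiv ℝ f) (x + s • v)))
        = fun s : ℝ => fderiv ℝ (fderiv ℝ f) (x + s • v) a b := rfl
    rw [hfun] at this
    rw [this]
    rfl
  rw [key h v, key v h]
  congr 1
  funext s
  exact ((hf.contDiffAt (x := x + s • v)).isSymmSndFDerivAt (by rw [minSmoothness_of_isRCLikeNormedField]; exact le_add_self)).eq h v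

lemma swapCore {G : Type*} [NormedAddCommGroup G] [NormedSpace ℝ G]
    (m : ℕ) (f : E → G) (hf : ContDiff ℝ (m+2) f) (x v h : E) :
    iteratedFDeriv ℝ (m+2) f x (Function.update (fun _ => v) ((Fin.last m).castSucc) h)
      = iteratedFDeriv ℝ (m+2) f x (Function.update (fun _ => v) (Fin.last (m+1)) h) := by
  have hne : (Fin.last m).castSucc ≠ Fin.last (m+1) := (Fin.castSucc_lt_last _).ne
  have hcp : (Fin.last m).castSucc.castPred hne = Fin.last m := by
    rw [← Fin.castSucc_inj, Fin.castSucc_castPred]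
  conv_lhs => rw [iteratedFDeriv_succ_apply_right]
  rw [finInitUpdateNe v h _ hne, finUpdateApplyLastNe v h _ hne, hcp]
  conv_lhs => rw [iteratedFDeriv_succ_apply_right]
  rw [finInitUpdateLast v h, Function.update_self]
  conv_rhs => rw [iteratedFDeriv_succ_apply_right]
  rw [finInitUpdateLast v h, Function.update_self]
  conv_rhs => rw [iteratedFDeriv_succ_apply_right]
  exact lastSwap m f hf x v h

lemma symAux : ∀ (n : ℕ) {G : Type (max u₁ u₂)} [NormedAddCommGroup G]
    [NormedSpace ℝ G] (f : E → G), ContDiff ℝ (n+1) f → ∀ (x v h : E) (j : Fin (n+1)),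
    iteratedFDeriv ℝ (n+1) f x (Function.update (fun _ => v) j h)
      = iteratedFDeriv ℝ (n+1) f x (Function.update (fun _ => v) (Fin.last n) h) := by
  intro n
  induction n with
  | zero =>
    intro G _ _ f hf x v h j
    have : j = Fin.last 0 := Fin.ext (by omega)
    rw [this]
  | succ n IH =>
    intro G _ _ f hf x v h j
    by_cases hj : j = Fin.last (n+1)
    · rw [hj]
    · have h1 : ContDiff ℝ (n+1) (fderiv ℝ f) := hf.fderiv_right (by exact_mod_cast le_rfl)
      have hne : (Fin.last n).castSucc ≠ Fin.last (n+1) := (Fin.castSucc_lt_last _).ne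
      have hcp : (Fin.last n).castSucc.castPred hne = Fin.last n := by
        rw [← Fin.castSucc_inj, Fin.castSucc_castPred]
      have e2 : iteratedFDeriv ℝ (n+1+1) f x
            (Function.update (fun _ => v) ((Fin.last n).castSucc) h)
          = iteratedFDeriv ℝ (n+1) (fun y => fderiv ℝ f y) x
              (Function.update (fun _ : Fin (n+1) => v) (Fin.last n) h) v := by
        conv_lhs => rw [iteratedFDeriv_succ_apply_right]
        rw [finInitUpdateNe v h _ hne, finUpdateApplyLastNe v h _ hne, hcp]
      conv_lhs => rw [iteratedFDeriv_succ_apply_right]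
      rw [finInitUpdateNe v h j hj, finUpdateApplyLastNe v h j hj]
      rw [IH (fderiv ℝ f) h1 x v h (j.castPred hj)]
      rw [← e2]
      exact swapCore n f hf x v h

lemma symScalar (n : ℕ) (f : E → ℝ) (hf : ContDiff ℝ (n+1) f) (x v h : E) (j : Fin (n+1)) :
    iteratedFDeriv ℝ (n+1) f x (Function.update (fun _ => v) j h)
      = iteratedFDeriv ℝ (n+1) f x (Function.update (fun _ => v) (Fin.last n) h) := by
  match n, hf, j with
  | 0, hf, j =>
    have : j = Fin.last 0 := Fin.ext (by omega)
    rw [this]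
  | Nat.succ n, hf, j =>
    by_cases hj : j = Fin.last (n+1)
    · rw [hj]
    · have h1 : ContDiff ℝ (n+1) (fderiv ℝ f) := hf.fderiv_right (by exact_mod_cast le_rfl)
      have hne : (Fin.last n).castSucc ≠ Fin.last (n+1) := (Fin.castSucc_lt_last _).ne
      have hcp : (Fin.last n).castSucc.castPred hne = Fin.last n := by
        rw [← Fin.castSucc_inj, Fin.castSucc_castPred]
      have e2 : iteratedFDeriv ℝ (n+1+1) f x
            (Function.update (fun _ => v) ((Fin.last n).castSucc) h)
          = iteratedFDeriv ℝ (n+1) (fun y => fderiv ℝ f y) x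
              (Function.update (fun _ : Fin (n+1) => v) (Fin.last n) h) v := by
        conv_lhs => rw [iteratedFDeriv_succ_apply_right]
        rw [finInitUpdateNe v h _ hne, finUpdateApplyLastNe v h _ hne, hcp]
      conv_lhs => rw [iteratedFDeriv_succ_apply_right]
      rw [finInitUpdateNe v h j hj, finUpdateApplyLastNe v h j hj]
      rw [symAux.{u₁, 0} n (fderiv ℝ f) h1 x v h (j.castPred hj)]
      rw [← e2]
      exact swapCore n f hf x v h

end Sym

open Finset in
lemma multiTaylorRemainder {E G : Type*} [NormedAddCommGroup E] [NormedSpace ℝ E]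
    [NormedAddCommGroup G] [NormedSpace ℝ G]
    (n : ℕ) (F : E → G) (hF : ContDiff ℝ n F) (L : ℝ) (hL : 0 ≤ L)
    (hLip : ∀ a b : E, ‖iteratedFDeriv ℝ n F a - iteratedFDeriv ℝ n F b‖ ≤ L * ‖a - b‖)
    (x y : E) :
    ‖F y - ∑ i ∈ Finset.range (n+1), (1 / (i.factorial : ℝ)) •
        iteratedFDeriv ℝ i F x (fun _ => y - x)‖
      ≤ L / (n+1).factorial * ‖y - x‖ ^ (n+1) := by
  set v := y - x with hv
  set φ : ℝ → G := fun s => F (x + s • v) with hφdef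
  have hlineC : ContDiff ℝ n (fun s : ℝ => x + s • v) :=
    contDiff_const.add (contDiff_id.smul contDiff_const)
  have hφ : ContDiff ℝ n φ := hF.comp hlineC
  have hvn : (0:ℝ) ≤ ‖v‖ ^ (n+1) := by positivity
  have hφLip : ∀ s t : ℝ, ‖iteratedDeriv n φ s - iteratedDeriv n φ t‖
      ≤ (L * ‖v‖ ^ (n+1)) * |s - t| := by
    intro s t
    rw [hφdef, lineTaylor n F hF x v s, lineTaylor n F hF x v t]
    have h1 : iteratedFDeriv ℝ n F (x + s • v) (fun _ => v)
          - iteratedFDeriv ℝ n F (x + t • v) (fun _ => v)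
        = (iteratedFDeriv ℝ n F (x + s • v) - iteratedFDeriv ℝ n F (x + t • v))
            (fun _ => v) := rfl
    rw [h1]
    calc ‖(iteratedFDeriv ℝ n F (x + s • v) - iteratedFDeriv ℝ n F (x + t • v))
            (fun _ => v)‖
        ≤ ‖iteratedFDeriv ℝ n F (x + s • v) - iteratedFDeriv ℝ n F (x + t • v)‖
            * ∏ _i : Fin n, ‖v‖ :=
          ContinuousMultilinearMap.le_opNorm _ _
      _ ≤ (L * ‖(x + s • v) - (x + t • v)‖) * ‖v‖ ^ n := by
          rw [Finset.prod_const]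
          simp only [Finset.card_univ, Fintype.card_fin]
          exact mul_le_mul_of_nonneg_right (hLip _ _) (by positivity)
      _ = (L * ‖v‖ ^ (n+1)) * |s - t| := by
          have : (x + s • v) - (x + t • v) = (s - t) • v := by
            rw [sub_smul]; abel
          rw [this, norm_smul, Real.norm_eq_abs]
          ring
  have key := oneDimTaylor n φ (L * ‖v‖ ^ (n+1)) (by positivity) hφ hφLip 1
    ⟨zero_le_one, le_rfl⟩
  have hφ1 : φ 1 = F y := by
    rw [hφdef]; simp [hv]
  have hφ0 : ∀ i ∈ Finset.range (n+1), ((1:ℝ) ^ i / (i.factorial:ℝ)) • iteratedDeriv i φ 0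
      = (1 / (i.factorial : ℝ)) • iteratedFDeriv ℝ i F x (fun _ => v) := by
    intro i hi
    have hFi : ContDiff ℝ i F := hF.of_le (by
      exact_mod_cast Nat.lt_succ_iff.mp (Finset.mem_range.mp hi))
    rw [hφdef, lineTaylor i F hFi x v 0]
    simp
  rw [hφ1] at key
  rw [Finset.sum_congr rfl hφ0] at key
  calc ‖F y - ∑ i ∈ Finset.range (n+1), (1 / (i.factorial : ℝ)) •
        iteratedFDeriv ℝ i F x (fun _ => v)‖
      ≤ L * ‖v‖ ^ (n+1) * 1 ^ (n+1) / (n+1).factorial := key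
    _ = L / (n+1).factorial * ‖v‖ ^ (n+1) := by ring

open scoped RealInnerProductSpace in
lemma normPowFDeriv {E : Type*} [NormedAddCommGroup E] [InnerProductSpace ℝ E]
    (p : ℕ) (hp : 2 ≤ p) (x y : E) :
    HasFDerivAt (fun z => ‖z - x‖ ^ p)
      (((p : ℝ) * ‖y - x‖ ^ (p-2)) • (innerSL ℝ (y - x))) y := by
  by_cases hyx : y = x
  · subst hyx
    have hz : (((p : ℝ) * ‖y - y‖ ^ (p-2)) • (innerSL ℝ (y - y))) = 0 := by
      simp
    rw [hz, hasFDerivAt_iff_isLittleO_nhds_zero]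
    have hfun : (fun h : E => ‖y + h - y‖ ^ p - ‖y - y‖ ^ p - (0 : E →L[ℝ] ℝ) h)
        = fun h : E => ‖h‖ ^ p := by
      funext h
      simp [zero_pow (by omega : p ≠ 0)]
    rw [hfun, Asymptotics.isLittleO_iff]
    intro c hc
    have hev : ∀ᶠ h : E in nhds 0, ‖h‖ ≤ min 1 c := by
      have hmem : Metric.closedBall (0:E) (min 1 c) ∈ nhds (0:E) :=
        Metric.closedBall_mem_nhds 0 (lt_min one_pos hc)
      filter_upwards [hmem] with h hh
      simpa [dist_eq_norm] using hh
    filter_upwards [hev] with h hh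
    have h1 : ‖h‖ ≤ 1 := le_trans hh (min_le_left _ _)
    have h2 : ‖h‖ ≤ c := le_trans hh (min_le_right _ _)
    have hkey : ‖h‖ ^ p ≤ c * ‖h‖ := by
      calc ‖h‖ ^ p = ‖h‖ ^ (p-1) * ‖h‖ := by
            rw [← pow_succ]; congr 1; omega
        _ ≤ c * ‖h‖ := by
            apply mul_le_mul_of_nonneg_right _ (norm_nonneg h)
            calc ‖h‖ ^ (p-1) ≤ ‖h‖ ^ 1 :=
                  pow_le_pow_of_le_one (norm_nonneg h) h1 (by omega)
              _ = ‖h‖ := pow_one _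
              _ ≤ c := h2
    calc ‖‖h‖ ^ p‖ = ‖h‖ ^ p := by
          rw [Real.norm_eq_abs, abs_of_nonneg (by positivity)]
      _ ≤ c * ‖h‖ := hkey
  · have hv : y - x ≠ 0 := sub_ne_zero.mpr hyx
    have hvpos : (0:ℝ) < ‖y - x‖ := norm_pos_iff.mpr hv
    have hinnerpos : (0:ℝ) < ⟪y - x, y - x⟫ := by
      rw [real_inner_self_eq_norm_sq]; positivity
    have hsub : HasFDerivAt (fun z : E => z - x) (ContinuousLinearMap.id ℝ E) y :=
      (hasFDerivAt_id y).sub_const x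
    have hinner : HasFDerivAt (fun z : E => (⟪z - x, z - x⟫ : ℝ))
        ((2:ℝ) • innerSL ℝ (y - x)) y := by
      have h0 := HasFDerivAt.inner (𝕜 := ℝ) hsub hsub
      refine h0.congr_fderiv ?_
      symm
      ext h
      simp only [ContinuousLinearMap.smul_apply, innerSL_apply_apply,
        ContinuousLinearMap.comp_apply, ContinuousLinearMap.prod_apply,
        fderivInnerCLM_apply, ContinuousLinearMap.coe_id', id_eq]
      rw [real_inner_comm (y - x) h, smul_eq_mul]
      ring
    have hrpow : HasDerivAt (fun t : ℝ => t ^ ((p:ℝ)/2))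
        (((p:ℝ)/2 * (⟪y - x, y - x⟫ : ℝ) ^ ((p:ℝ)/2 - 1))) (⟪y - x, y - x⟫ : ℝ) :=
      Real.hasDerivAt_rpow_const (Or.inl hinnerpos.ne')
    have hcomp := hrpow.comp_hasFDerivAt y hinner
    have hfun : (fun z : E => ((⟪z - x, z - x⟫ : ℝ)) ^ ((p:ℝ)/2))
        = fun z : E => ‖z - x‖ ^ p := by
      funext z
      rw [real_inner_self_eq_norm_sq, ← Real.rpow_natCast ‖z - x‖ 2,
        ← Real.rpow_mul (norm_nonneg _), ← Real.rpow_natCast ‖z - x‖ p]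
      congr 1
      push_cast
      ring
    have hcoef : ((⟪y - x, y - x⟫ : ℝ)) ^ ((p:ℝ)/2 - 1) = ‖y - x‖ ^ (p-2) := by
      rw [real_inner_self_eq_norm_sq, ← Real.rpow_natCast ‖y - x‖ 2,
        ← Real.rpow_mul (norm_nonneg _), ← Real.rpow_natCast ‖y - x‖ (p-2)]
      congr 1
      have h2 : ((p - 2 : ℕ) : ℝ) = (p:ℝ) - 2 := by
        rw [Nat.cast_sub hp]; norm_num
      rw [h2]
      ring
    have hD : ((p:ℝ) * ‖y - x‖ ^ (p-2)) • innerSL ℝ (y - x)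
        = ((p:ℝ)/2 * ((⟪y - x, y - x⟫ : ℝ)) ^ ((p:ℝ)/2 - 1)) • ((2:ℝ) • innerSL ℝ (y - x)) := by
      rw [smul_smul, hcoef]
      congr 1
      ring
    rw [hD, ← hfun]
    exact hcomp

set_option maxHeartbeats 1000000 in
set_option synthInstance.maxHeartbeats 1000000 in
open Finset in
lemma taylorRegGradBound {E : Type*} [NormedAddCommGroup E] [InnerProductSpace ℝ E]
    [CompleteSpace E]
    (m : ℕ) (Ld M : ℝ) (hLd : 0 ≤ Ld) (hM : 0 ≤ M) (f : E → ℝ)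
    (hf : ContDiff ℝ ((m+2 : ℕ) : ℕ∞) f)
    (hLip : ∀ a b : E, ‖iteratedFDeriv ℝ (m+2) f a - iteratedFDeriv ℝ (m+2) f b‖
      ≤ Ld * ‖a - b‖)
    (x y : E) :
    ‖gradient f y - gradient (taylorReg f (m+2) M x) y‖
      ≤ (Ld + M) / ((m+2).factorial : ℝ) * ‖y - x‖ ^ (m+2) := by
  set v := y - x with hv
  set F₁ := fderiv ℝ f with hF₁
  have hfC : ContDiff ℝ ((m+2 : ℕ) : WithTop ℕ∞) f := by exact_mod_cast hf
  have hfd : ContDiff ℝ (m+1) F₁ := hfC.fderiv_right (by exact_mod_cast le_rfl)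
  -- Lipschitz property of the (m+1)-th derivative of F₁
  have hLip1 : ∀ a b : E, ‖iteratedFDeriv ℝ (m+1) F₁ a - iteratedFDeriv ℝ (m+1) F₁ b‖
      ≤ Ld * ‖a - b‖ := by
    intro a b
    set e := continuousMultilinearCurryRightEquiv' ℝ (m+1) E ℝ with he
    have hea : ∀ z : E, iteratedFDeriv ℝ (m+2) f z
        = e.symm (iteratedFDeriv ℝ (m+1) (fun w => fderiv ℝ f w) z) := by
      intro z
      rw [iteratedFDeriv_succ_eq_comp_right]
      rfl
    have : ‖iteratedFDeriv ℝ (m+1) F₁ a - iteratedFDeriv ℝ (m+1) F₁ b‖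
        = ‖iteratedFDeriv ℝ (m+2) f a - iteratedFDeriv ℝ (m+2) f b‖ := by
      rw [hea, hea, ← LinearIsometryEquiv.map_sub, LinearIsometryEquiv.norm_map]
    rw [this]
    exact hLip a b
  -- Taylor remainder bound for F₁
  have hTay := multiTaylorRemainder (m+1) F₁ hfd Ld hLd hLip1 x y
  set S : E →L[ℝ] ℝ := ∑ i ∈ range (m+2), (1 / (i.factorial : ℝ)) •
    iteratedFDeriv ℝ i F₁ x (fun _ => v) with hS
  have hTay' : ‖F₁ y - S‖ ≤ Ld / ((m+2).factorial : ℝ) * ‖v‖ ^ (m+2) := by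
    have hSsum : S = ∑ i ∈ range (m+1+1), (1 / (i.factorial : ℝ)) •
        iteratedFDeriv ℝ i F₁ x (fun _ => y - x) := by rw [hS]
    rw [hSsum]
    exact hTay
  -- derivative of the polynomial part
  set T : ℕ → (E →L[ℝ] ℝ) := fun i => (1 / (i.factorial : ℝ)) •
    (∑ j : Fin i, ((iteratedFDeriv ℝ i f x).toContinuousLinearMap (fun _ => v) j).comp
      (ContinuousLinearMap.id ℝ E)) with hT
  have hterm : ∀ i ∈ range (m+3), HasFDerivAt
      (fun z : E => (1 / (i.factorial : ℝ)) * iteratedFDeriv ℝ i f x (fun _ => z - x))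
      (T i) y := by
    intro i _
    have hml := HasFDerivAt.multilinear_comp (iteratedFDeriv ℝ i f x)
      (g := fun _ : Fin i => fun z : E => z - x)
      (g' := fun _ : Fin i => ContinuousLinearMap.id ℝ E)
      (x := y) (fun _ => (hasFDerivAt_id y).sub_const x)
    exact hml.const_mul (1 / (i.factorial : ℝ))
  have hpoly : HasFDerivAt
      (fun z : E => ∑ i ∈ range (m+2+1),
        (1 / (i.factorial : ℝ)) * iteratedFDeriv ℝ i f x (fun _ => z - x))
      (∑ i ∈ range (m+3), T i) y := HasFDerivAt.fun_sum hterm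
  -- the sum of the T i equals S
  have hTA : ∀ i, ∀ hh : E, T i hh = (1 / (i.factorial : ℝ)) *
      (∑ j : Fin i, iteratedFDeriv ℝ i f x (Function.update (fun _ => v) j hh)) := by
    intro i hh
    rw [hT]
    simp [ContinuousLinearMap.sum_apply, smul_eq_mul]
  have hinner : ∀ k, k + 1 ≤ m + 2 → ∀ hh : E,
      (∑ j : Fin (k+1), iteratedFDeriv ℝ (k+1) f x (Function.update (fun _ => v) j hh))
        = ((k:ℝ)+1) * ((iteratedFDeriv ℝ k F₁ x (fun _ => v)) hh) := by
    intro k hk hh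
    have hsm : ContDiff ℝ (k+1) f := hfC.of_le (by exact_mod_cast hk)
    have h1 : ∀ j : Fin (k+1),
        iteratedFDeriv ℝ (k+1) f x (Function.update (fun _ => v) j hh)
          = iteratedFDeriv ℝ (k+1) f x (Function.update (fun _ => v) (Fin.last k) hh) :=
      fun j => symScalar k f hsm x v hh j
    rw [Finset.sum_congr rfl (fun j _ => h1 j), Finset.sum_const, Finset.card_univ,
      Fintype.card_fin, nsmul_eq_mul, iteratedFDeriv_succ_apply_right, finInitUpdateLast,
      Function.update_self]
    have hEta : (fun w => fderiv ℝ f w) = F₁ := rfl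
    rw [hEta]
    push_cast
    ring
  have hSsum : (∑ i ∈ range (m+3), T i) = S := by
    apply ContinuousLinearMap.ext
    intro hh
    rw [ContinuousLinearMap.sum_apply]
    rw [Finset.sum_congr rfl (fun i _ => hTA i hh), Finset.sum_range_succ']
    have hzero : (1 / ((0:ℕ).factorial : ℝ)) *
        (∑ j : Fin 0, iteratedFDeriv ℝ 0 f x (Function.update (fun _ => v) j hh)) = 0 := by
      simp
    rw [hzero, add_zero, hS, ContinuousLinearMap.sum_apply]
    apply Finset.sum_congr rfl
    intro k hk
    rw [hinner k (by { have := Finset.mem_range.mp hk; omega }) hh, ContinuousLinearMap.smul_apply, smul_eq_mul]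
    have hfac : ((k+1).factorial : ℝ) = ((k:ℝ)+1) * (k.factorial : ℝ) := by
      push_cast [Nat.factorial_succ]; ring
    rw [hfac]
    have hk1 : ((k:ℝ)+1) ≠ 0 := by positivity
    have hkf : ((k.factorial : ℝ)) ≠ 0 := by positivity
    field_simp
  rw [hSsum] at hpoly
  -- derivative of the regularization term
  have hregcore := normPowFDeriv (m+3) (by omega) x y
  have hreg : HasFDerivAt (fun z : E => M / (((m+2)+1).factorial : ℝ) * ‖z - x‖ ^ ((m+2)+1))
      ((M / (((m+2)+1).factorial : ℝ)) •
        ((((m+3:ℕ) : ℝ) * ‖v‖ ^ (m+1)) • innerSL ℝ v)) y := by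
    have h3 : m + 3 - 2 = m + 1 := by omega
    rw [h3] at hregcore
    exact hregcore.const_mul (M / (((m+2)+1).factorial : ℝ))
  -- combine
  have hTfd : HasFDerivAt (taylorReg f (m+2) M x)
      (S + ((M / (((m+2)+1).factorial : ℝ)) •
        ((((m+3:ℕ) : ℝ) * ‖v‖ ^ (m+1)) • innerSL ℝ v))) y := by
    unfold taylorReg
    exact hpoly.add hreg
  set R : E →L[ℝ] ℝ := (M / (((m+2)+1).factorial : ℝ)) •
    ((((m+3:ℕ) : ℝ) * ‖v‖ ^ (m+1)) • innerSL ℝ v) with hR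
  have hRnorm : ‖R‖ ≤ M / ((m+2).factorial : ℝ) * ‖v‖ ^ (m+2) := by
    have h0 : ‖R‖ = (M / (((m+3)).factorial : ℝ)) * (((m+3:ℕ) : ℝ) * ‖v‖ ^ (m+1) * ‖v‖) := by
      rw [hR, norm_smul (M / (((m+2)+1).factorial : ℝ))
          ((((m+3:ℕ) : ℝ) * ‖v‖ ^ (m+1)) • innerSL ℝ v),
        norm_smul (((m+3:ℕ) : ℝ) * ‖v‖ ^ (m+1)) (innerSL ℝ v), innerSL_apply_norm,
        Real.norm_eq_abs, Real.norm_eq_abs]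
      rw [abs_of_nonneg (by positivity : (0:ℝ) ≤ M / (((m+2)+1).factorial : ℝ)),
        abs_of_nonneg (by positivity : (0:ℝ) ≤ ((m+3:ℕ) : ℝ) * ‖v‖ ^ (m+1))]
    rw [h0]
    have hfac : (((m+3)).factorial : ℝ) = ((m+3:ℕ) : ℝ) * ((m+2).factorial : ℝ) := by
      push_cast [show m + 3 = (m+2)+1 from rfl, Nat.factorial_succ]
      ring
    rw [hfac]
    have hne : ((m+3:ℕ) : ℝ) ≠ 0 := by positivity
    have hne2 : (((m+2)).factorial : ℝ) ≠ 0 := by positivity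
    apply le_of_eq
    field_simp
    ring
  -- gradient norm identity
  have hgrad : ‖gradient f y - gradient (taylorReg f (m+2) M x) y‖
      = ‖fderiv ℝ f y - fderiv ℝ (taylorReg f (m+2) M x) y‖ := by
    rw [gradient, gradient, ← LinearIsometryEquiv.map_sub, LinearIsometryEquiv.norm_map]
  rw [hgrad, hTfd.fderiv]
  calc ‖fderiv ℝ f y - (S + R)‖ = ‖(F₁ y - S) - R‖ := by rw [hF₁]; congr 1; abel
    _ ≤ ‖F₁ y - S‖ + ‖R‖ := norm_sub_le _ _
    _ ≤ Ld / ((m+2).factorial : ℝ) * ‖v‖ ^ (m+2)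
        + M / ((m+2).factorial : ℝ) * ‖v‖ ^ (m+2) := add_le_add hTay' hRnorm
    _ = (Ld + M) / ((m+2).factorial : ℝ) * ‖v‖ ^ (m+2) := by ring

lemma rpow_nat_collapse (a : ℝ) (ha : 0 ≤ a) (e : ℝ) (k : ℕ) :
    (a ^ e) ^ k = a ^ (e * (k:ℝ)) := by
  rw [← Real.rpow_natCast (a ^ e) k, ← Real.rpow_mul ha]

set_option maxHeartbeats 4000000 in
set_option synthInstance.maxHeartbeats 4000000 in
theorem stmt5 {E : Type*} [NormedAddCommGroup E] [InnerProductSpace ℝ E]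
    [FiniteDimensional ℝ E]
    (d : ℕ) (hd : 2 ≤ d) (Ld M : ℝ) (hLd : 0 < Ld) (hM : 0 ≤ M)
    (f : E → ℝ) (hf : ContDiff ℝ (d : ℕ∞) f)
    (hLip : ∀ x y : E, ‖iteratedFDeriv ℝ d f x - iteratedFDeriv ℝ d f y‖ ≤ Ld * ‖x - y‖)
    (h : E → ℝ) (hh : ConvexOn ℝ Set.univ h)
    (ρb εb σh α σ : ℝ) (hρb : 0 < ρb) (hεb : 0 < εb) (hσh : 0 ≤ σh) (hα : 0 < α)
    (hσdef : σ = σh + (Ld + M) / (d.factorial : ℝ) * α) (hσ1 : σ < 1)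
    (lam : ℝ) (hlam : 0 < lam)
    (hlamge : max
        (α ^ (1 / (d : ℝ)) *
          (1 / ρb * (1 + σh + (Ld + M) / (d.factorial : ℝ) * α)) ^ (1 - 1 / (d : ℝ)))
        ((σ ^ 2 * α ^ (2 / ((d : ℝ) - 1)) / (2 * εb)) ^ (((d : ℝ) - 1) / ((d : ℝ) + 1)))
      ≤ lam)
    (x y u : E) (ε : ℝ) (hε : 0 ≤ ε)
    -- (y, u, ε) is a σ̂-approximate solution at (λ, x):
    (happrox1 : u - gradient (taylorReg f d M x) y ∈ epsSubdiff h ε y)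
    (happrox2 : ‖lam • u + y - x‖ ^ 2 + 2 * lam * ε ≤ σh ^ 2 * ‖y - x‖ ^ 2) :
    α < lam * ‖y - x‖ ^ (d - 1) ∨
      (‖gradient f y - gradient (taylorReg f d M x) y + u‖ ≤ ρb ∧ ε ≤ εb) := by
  by_cases hcase : α < lam * ‖y - x‖ ^ (d - 1)
  · exact Or.inl hcase
  right
  push_neg at hcase
  obtain ⟨m, rfl⟩ : ∃ m, d = m + 2 := ⟨d - 2, by omega⟩
  set r := ‖y - x‖ with hr
  have hr0 : (0:ℝ) ≤ r := norm_nonneg _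
  have hc1 : lam * r ^ (m+1) ≤ α := by
    have hmm : m + 2 - 1 = m + 1 := by omega
    rwa [hmm] at hcase
  set K := (Ld + M) / (((m+2)).factorial : ℝ) with hK
  have hK0 : 0 < K := by positivity
  have hKα : 0 < K * α := mul_pos hK0 hα
  -- gradient bound from the Taylor machinery
  have hgb := taylorRegGradBound m Ld M hLd.le hM f (by exact_mod_cast hf) hLip x y
  -- basic consequences of happrox2
  have hN : ‖lam • u + y - x‖ ≤ σh * r := by
    have h2 : ‖lam • u + y - x‖ ^ 2 ≤ (σh * r) ^ 2 := by
      have h3 : 0 ≤ 2 * lam * ε := by positivity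
      have h4 : (σh * r)^2 = σh^2 * r^2 := by ring
      rw [h4]; linarith
    exact (pow_le_pow_iff_left₀ (norm_nonneg _) (by positivity) (two_ne_zero)).mp h2
  have hEps2 : 2 * lam * ε ≤ σh ^ 2 * r ^ 2 := by
    nlinarith [sq_nonneg ‖lam • u + y - x‖]
  -- the constant c
  set c := 1 + σh + K * α with hc
  have hc0 : (0:ℝ) < c := by rw [hc]; linarith
  -- r bound
  have hrb : r ^ (m+1) ≤ α / lam := (le_div_iff₀' hlam).mpr hc1
  set D : ℝ := ((m+2 : ℕ) : ℝ) with hD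
  have hDne : ((m+2 : ℕ) : ℝ) ≠ 0 := by positivity
  set q := 1 / ρb * c with hq
  have hq0 : 0 ≤ q := by rw [hq, hc]; positivity
  set B := σ ^ 2 * α ^ (2 / (D - 1)) / (2 * εb) with hB
  have hmax := max_le_iff.mp hlamge
  have hge1 : α ^ ((1:ℝ) / D) * q ^ (1 - 1/D) ≤ lam := hmax.1
  have hge2 : B ^ ((D - 1) / (D + 1)) ≤ lam := hmax.2
  have hpow1 : α * q ^ (m+1) ≤ lam ^ (m+2) := by
    have h1 := pow_le_pow_left₀ (by positivity) hge1 (m+2)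
    rw [mul_pow, rpow_nat_collapse α hα.le _ (m+2), rpow_nat_collapse q hq0 _ (m+2)] at h1
    have e1 : (1:ℝ)/D * ((m+2 : ℕ) : ℝ) = 1 := by
      rw [hD]; field_simp
    have e2 : (1 - 1/D) * ((m+2 : ℕ) : ℝ) = ((m+1 : ℕ) : ℝ) := by
      rw [hD]; push_cast
      have hne : (m:ℝ) + 2 ≠ 0 := by positivity
      field_simp; ring
    rw [e1, e2, Real.rpow_one, Real.rpow_natCast] at h1
    exact h1
  -- norm bound on w + u
  set w := gradient f y - gradient (taylorReg f (m+2) M x) y with hw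
  have hwb : ‖w‖ ≤ K * r ^ (m+2) := hgb
  have hkey : lam * ‖w + u‖ ≤ c * r := by
    have e1 : lam • (w + u) = lam • w + ((lam • u + y - x) - (y - x)) := by
      rw [smul_add]; abel
    have e2 : ‖lam • (w + u)‖ ≤ ‖lam • w‖ + (‖lam • u + y - x‖ + ‖y - x‖) := by
      rw [e1]
      calc ‖lam • w + ((lam • u + y - x) - (y - x))‖
          ≤ ‖lam • w‖ + ‖(lam • u + y - x) - (y - x)‖ := norm_add_le _ _
        _ ≤ ‖lam • w‖ + (‖lam • u + y - x‖ + ‖y - x‖) := by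
            have := norm_sub_le (lam • u + y - x) (y - x)
            linarith
    rw [norm_smul, Real.norm_eq_abs, abs_of_pos hlam] at e2
    have e3 : ‖lam • w‖ = lam * ‖w‖ := by
      rw [norm_smul, Real.norm_eq_abs, abs_of_pos hlam]
    rw [e3] at e2
    have e4 : lam * ‖w‖ ≤ K * α * r := by
      have h5 : lam * ‖w‖ ≤ lam * (K * r ^ (m+2)) := mul_le_mul_of_nonneg_left hwb hlam.le
      have h6 : lam * (K * r^(m+2)) = K * r * (lam * r^(m+1)) := by ring
      have h7 : K * r * (lam * r^(m+1)) ≤ K * r * α :=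
        mul_le_mul_of_nonneg_left hc1 (by positivity)
      nlinarith
    have e6 : c * r = K * α * r + (σh * r + r) := by rw [hc]; ring
    rw [e6]
    linarith [hN]
  constructor
  · -- ‖w + u‖ ≤ ρb
    have h8 : α * c^(m+1) ≤ lam^(m+2) * ρb^(m+1) := by
      have h9 : α * q^(m+1) * ρb^(m+1) ≤ lam^(m+2) * ρb^(m+1) :=
        mul_le_mul_of_nonneg_right hpow1 (by positivity)
      have h10 : α * q^(m+1) * ρb^(m+1) = α * c^(m+1) := by
        rw [hq, mul_pow, one_div, inv_pow]
        field_simp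
      rwa [h10] at h9
    have hstep : α / lam ≤ (lam * ρb / c) ^ (m+1) := by
      rw [div_pow, div_le_div_iff₀ hlam (by positivity)]
      calc α * c^(m+1) ≤ lam^(m+2) * ρb^(m+1) := h8
        _ = (lam * ρb)^(m+1) * lam := by ring
    have hru : r ≤ lam * ρb / c := by
      have h11 := le_trans hrb hstep
      exact (pow_le_pow_iff_left₀ hr0 (by positivity) (by omega)).mp h11
    have h12 : lam * ‖w + u‖ ≤ lam * ρb := by
      calc lam * ‖w + u‖ ≤ c * r := hkey
        _ ≤ c * (lam * ρb / c) := mul_le_mul_of_nonneg_left hru hc0.le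
        _ = lam * ρb := by field_simp
    exact le_of_mul_le_mul_left h12 hlam
  · -- ε ≤ εb
    have hσ0 : 0 ≤ σ := by rw [hσdef]; linarith
    have hσhσ : σh ≤ σ := by rw [hσdef]; linarith
    have hEps3 : 2 * lam * ε ≤ σ^2 * r^2 := by
      have h13 : σh^2 * r^2 ≤ σ^2 * r^2 := by
        apply mul_le_mul_of_nonneg_right _ (by positivity)
        exact pow_le_pow_left₀ hσh hσhσ 2
      linarith
    have hB0 : 0 ≤ B := by
      rw [hB]
      have := Real.rpow_nonneg hα.le (2 / (D - 1))
      positivity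
    have hD1 : D - 1 = ((m+1 : ℕ) : ℝ) := by rw [hD]; push_cast; ring
    have hpow2 : σ^(2*(m+1)) * α^2 ≤ (2*εb)^(m+1) * lam^(m+3) := by
      have h1 := pow_le_pow_left₀ (Real.rpow_nonneg hB0 _) hge2 (m+3)
      rw [rpow_nat_collapse B hB0 _ (m+3)] at h1
      have e1 : (D - 1) / (D + 1) * ((m+3 : ℕ) : ℝ) = ((m+1 : ℕ) : ℝ) := by
        rw [hD]; push_cast
        have hne : (m:ℝ) + 2 + 1 ≠ 0 := by positivity
        field_simp
        ring
      rw [e1, Real.rpow_natCast] at h1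
      have e2 : B ^ (m+1) = σ^(2*(m+1)) * α^2 / (2*εb)^(m+1) := by
        rw [hB, div_pow, mul_pow, rpow_nat_collapse α hα.le _ (m+1)]
        have e3 : 2 / (D - 1) * ((m+1 : ℕ) : ℝ) = ((2:ℕ) : ℝ) := by
          rw [hD1]
          have hne : ((m+1 : ℕ) : ℝ) ≠ 0 := by positivity
          field_simp
          norm_num
        rw [e3, Real.rpow_natCast, ← pow_mul]
      rw [e2, div_le_iff₀ (by positivity)] at h1
      calc σ^(2*(m+1)) * α^2 ≤ lam ^ (m+3) * (2*εb)^(m+1) := h1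
        _ = (2*εb)^(m+1) * lam^(m+3) := by ring
    have hfinal : σ^2 * r^2 ≤ 2 * lam * εb := by
      have hpos : (0:ℝ) < 2 * lam * εb := by positivity
      have hσp : 0 ≤ σ^(2*(m+1)) := pow_nonneg hσ0 _
      have hcmp : (σ^2 * r^2)^(m+1) ≤ (2 * lam * εb)^(m+1) := by
        have h1 : (σ^2 * r^2)^(m+1) = σ^(2*(m+1)) * (r^(m+1))^2 := by
          rw [mul_pow, ← pow_mul, ← pow_mul]
          ring_nf
        have h2 : (r^(m+1))^2 ≤ (α/lam)^2 := pow_le_pow_left₀ (by positivity) hrb 2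
        have h3 : σ^(2*(m+1)) * (r^(m+1))^2 ≤ σ^(2*(m+1)) * (α/lam)^2 :=
          mul_le_mul_of_nonneg_left h2 hσp
        have h4 : σ^(2*(m+1)) * (α/lam)^2 ≤ (2*lam*εb)^(m+1) := by
          rw [div_pow, ← mul_div_assoc, div_le_iff₀ (by positivity)]
          calc σ^(2*(m+1)) * α^2 ≤ (2*εb)^(m+1) * lam^(m+3) := hpow2
            _ = (2*lam*εb)^(m+1) * lam^2 := by ring
        rw [h1]
        linarith
      exact (pow_le_pow_iff_left₀ (by positivity) hpos.le (by omega)).mp hcmp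
    have h2l : (0:ℝ) < 2 * lam := by positivity
    exact le_of_mul_le_mul_left (by linarith) h2l
end
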